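/- For every w ∈ ℂ with |w| < R = 1/(1-q), the series E_q(-w) := Σ_{n=0}^∞ (-1)^n q^{n(n-1)/2} w^n/[n]_q! converges absolutely and e_q(w) · E_q(-w) = 1; that is, the second q-exponential series provides a multiplicative inverse of e_q on the disc of convergence. -/

import Mathlib

open scoped BigOperators

/-- The q-number `[n]_q = (1 - q^n)/(1 - q)`. -/
noncomputable def qnum (q : ℝ) (n : ℕ) : ℝ := (1 - q ^ n) / (1 - q)

/-- The q-factorial `[n]_q! = [1]_q [2]_q ⋯ [n]_q`, with `[0]_q! = 1`. -/
noncomputable def qfact (q : ℝ) : ℕ → ℝ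
  | 0 => 1
  | n + 1 => qfact q n * qnum q (n + 1)

/-- The complex q-exponential `e_q(w) = ∑ w^n/[n]_q!`. -/
noncomputable def qexC (q : ℝ) (w : ℂ) : ℂ := ∑' n : ℕ, w ^ n / (qfact q n : ℂ)

/-- The real q-exponential `e_q(x) = ∑ x^n/[n]_q!`. -/
noncomputable def qexR (q : ℝ) (x : ℝ) : ℝ := ∑' n : ℕ, x ^ n / qfact q n

section Aux

variable {q : ℝ}

lemma qnum_pos (hq0 : 0 < q) (hq1 : q < 1) {n : ℕ} (hn : 0 < n) : 0 < qnum q n := by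
  have h1 : q ^ n < 1 := pow_lt_one₀ hq0.le hq1 hn.ne'
  exact div_pos (by linarith) (by linarith)

lemma qfact_pos (hq0 : 0 < q) (hq1 : q < 1) : ∀ n, 0 < qfact q n
  | 0 => by simp [qfact]
  | n + 1 => mul_pos (qfact_pos hq0 hq1 n) (qnum_pos hq0 hq1 n.succ_pos)

lemma qfact_succ (n : ℕ) : qfact q (n + 1) = qfact q n * qnum q (n + 1) := rfl

lemma qnum_split (hq1 : q < 1) {k n : ℕ} (hk : k ≤ n) :
    qnum q n = qnum q k + q ^ k * qnum q (n - k) := by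
  have hq : (1 : ℝ) - q ≠ 0 := by linarith
  have hpow : q ^ k * q ^ (n - k) = q ^ n := by
    rw [← pow_add, Nat.add_sub_cancel' hk]
  unfold qnum
  field_simp
  linarith [hpow]

/-- The key alternating identity `∑ (-1)^k q^(C(k,2)) / ([k]! [n-k]!) = 0` for `n ≥ 1`. -/
lemma key_identity (hq0 : 0 < q) (hq1 : q < 1) (n : ℕ) (hn : 0 < n) :
    ∑ k ∈ Finset.range (n + 1),
      (-1 : ℝ) ^ k * q ^ (k.choose 2) / (qfact q k * qfact q (n - k)) = 0 := by
  have hqn : qnum q n ≠ 0 := (qnum_pos hq0 hq1 hn).ne'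
  have hfact : ∀ m, (0:ℝ) < qfact q m := qfact_pos hq0 hq1
  set A : ℕ → ℝ := fun k =>
    (-1 : ℝ) ^ k * q ^ (k.choose 2) * qnum q k / (qfact q k * qfact q (n - k)) with hA
  set B : ℕ → ℝ := fun k =>
    (-1 : ℝ) ^ k * q ^ (k.choose 2) * q ^ k * qnum q (n - k) /
      (qfact q k * qfact q (n - k)) with hB
  have hterm : ∀ k ∈ Finset.range (n + 1),
      (-1 : ℝ) ^ k * q ^ (k.choose 2) / (qfact q k * qfact q (n - k)) * qnum q n
        = A k + B k := by
    intro k hk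
    have hkn : k ≤ n := Nat.lt_succ_iff.mp (Finset.mem_range.mp hk)
    rw [qnum_split hq1 hkn, hA, hB]
    ring
  have hA0 : A 0 = 0 := by simp [hA, qnum]
  have hBn : B n = 0 := by simp [hB, qnum]
  have hzero : ∀ j ∈ Finset.range n, A (j + 1) + B j = 0 := by
    intro j hj
    have hjn : j < n := Finset.mem_range.mp hj
    have hm : n - j = (n - (j + 1)) + 1 := by omega
    have hch : (j + 1).choose 2 = j.choose 2 + j := by
      rw [Nat.choose_succ_succ]
      simp [Nat.choose_one_right, Nat.add_comm]
    simp only [hA, hB, hm, qfact_succ, hch, pow_add, pow_succ]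
    have h1 := (hfact j).ne'
    have h2 := (hfact (n - (j + 1))).ne'
    have h3 := (qnum_pos hq0 hq1 (Nat.succ_pos j)).ne'
    have h4 := (qnum_pos hq0 hq1 (Nat.succ_pos (n - (j + 1)))).ne'
    field_simp
    ring
  have hmain : (∑ k ∈ Finset.range (n + 1),
      (-1 : ℝ) ^ k * q ^ (k.choose 2) / (qfact q k * qfact q (n - k))) * qnum q n = 0 := by
    rw [Finset.sum_mul, Finset.sum_congr rfl hterm, Finset.sum_add_distrib,
      Finset.sum_range_succ' A, Finset.sum_range_succ B, hA0, hBn, add_zero, add_zero,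
      ← Finset.sum_add_distrib]
    exact Finset.sum_eq_zero hzero
  exact (mul_eq_zero.mp hmain).resolve_right hqn

lemma key_identity' (hq0 : 0 < q) (hq1 : q < 1) (n : ℕ) (hn : 0 < n) :
    ∑ k ∈ Finset.range (n + 1),
      (-1 : ℝ) ^ (n - k) * q ^ ((n - k).choose 2) / (qfact q k * qfact q (n - k)) = 0 := by
  have h := key_identity hq0 hq1 n hn
  calc ∑ k ∈ Finset.range (n + 1),
        (-1 : ℝ) ^ (n - k) * q ^ ((n - k).choose 2) / (qfact q k * qfact q (n - k))
      = ∑ k ∈ Finset.range (n + 1),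
        (-1 : ℝ) ^ (n - k) * q ^ ((n - k).choose 2) /
          (qfact q (n - k) * qfact q (n - (n - k))) := by
        refine Finset.sum_congr rfl fun k hk => ?_
        have hkn : k ≤ n := Nat.lt_succ_iff.mp (Finset.mem_range.mp hk)
        rw [Nat.sub_sub_self hkn, mul_comm (qfact q k)]
    _ = ∑ k ∈ Finset.range (n + 1),
        (-1 : ℝ) ^ k * q ^ (k.choose 2) / (qfact q k * qfact q (n - k)) := by
        simpa using Finset.sum_range_reflect
          (fun k => (-1 : ℝ) ^ k * q ^ (k.choose 2) / (qfact q k * qfact q (n - k))) (n + 1)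
    _ = 0 := h

lemma summable_pow_div_qfact (hq0 : 0 < q) (hq1 : q < 1) {c : ℝ} (hc0 : 0 ≤ c)
    (hc : c < 1 / (1 - q)) : Summable (fun n => c ^ n / qfact q n) := by
  have hq' : (0:ℝ) < 1 - q := by linarith
  have hcq : c * (1 - q) < 1 := by
    have := (lt_div_iff₀ hq').mp hc
    linarith
  set r : ℝ := (c * (1 - q) + 1) / 2 with hr
  have hr1 : r < 1 := by rw [hr]; linarith
  have hr0 : 0 < r := by
    have : 0 ≤ c * (1 - q) := mul_nonneg hc0 hq'.le
    rw [hr]; linarith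
  have hlt : c < r * (1 / (1 - q)) := by
    rw [mul_one_div, lt_div_iff₀ hq', hr]
    linarith
  have htend : Filter.Tendsto (fun n : ℕ => r * qnum q (n + 1)) Filter.atTop
      (nhds (r * (1 / (1 - q)))) := by
    have h0 : Filter.Tendsto (fun n : ℕ => q ^ (n + 1)) Filter.atTop (nhds 0) := by
      have := (tendsto_pow_atTop_nhds_zero_of_lt_one hq0.le hq1).comp
        (Filter.tendsto_add_atTop_nat 1)
      exact this
    have : Filter.Tendsto (fun n : ℕ => (1 - q ^ (n + 1)) / (1 - q)) Filter.atTop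
        (nhds ((1 - 0) / (1 - q))) := ((tendsto_const_nhds.sub h0).div_const (1 - q))
    simpa [qnum] using (this.const_mul r)
  have hev : ∀ᶠ n in Filter.atTop, c ≤ r * qnum q (n + 1) :=
    htend.eventually (eventually_ge_nhds hlt)
  apply summable_of_ratio_norm_eventually_le hr1
  filter_upwards [hev] with n h
  have hF : 0 < qfact q n := qfact_pos hq0 hq1 n
  have hN : 0 < qnum q (n + 1) := qnum_pos hq0 hq1 n.succ_pos
  have hd1 : 0 ≤ c ^ (n + 1) / qfact q (n + 1) :=
    div_nonneg (pow_nonneg hc0 _) (qfact_pos hq0 hq1 _).le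
  have hd2 : 0 ≤ c ^ n / qfact q n := div_nonneg (pow_nonneg hc0 _) hF.le
  rw [Real.norm_of_nonneg hd1, Real.norm_of_nonneg hd2]
  have e1 : c ^ (n + 1) / qfact q (n + 1) = (c / qnum q (n + 1)) * (c ^ n / qfact q n) := by
    rw [qfact_succ, pow_succ]
    field_simp
  have e2 : c / qnum q (n + 1) ≤ r := (div_le_iff₀ hN).mpr h
  rw [e1]
  exact mul_le_mul_of_nonneg_right e2 hd2

end Aux

/-- for `‖w‖ < R = 1/(1-q)` the series
`E_q(-w) = ∑ (-1)^n q^{n(n-1)/2} w^n/[n]_q!` converges absolutely and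
`e_q(w) · E_q(-w) = 1`. -/
theorem qexp_mul_second_qexp_eq_one (q : ℝ) (hq0 : 0 < q) (hq1 : q < 1) (w : ℂ)
    (hw : ‖w‖ < 1 / (1 - q)) :
    Summable (fun n : ℕ =>
      ‖(-1 : ℂ) ^ n * (q : ℂ) ^ (n * (n - 1) / 2) * w ^ n / (qfact q n : ℂ)‖) ∧
    qexC q w *
      (∑' n : ℕ, (-1 : ℂ) ^ n * (q : ℂ) ^ (n * (n - 1) / 2) * w ^ n / (qfact q n : ℂ)) = 1 := by
  have hfactpos : ∀ m, (0:ℝ) < qfact q m := qfact_pos hq0 hq1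
  have hsum : Summable (fun n => ‖w‖ ^ n / qfact q n) :=
    summable_pow_div_qfact hq0 hq1 (norm_nonneg w) hw
  have hnormf : ∀ n : ℕ, ‖w ^ n / (qfact q n : ℂ)‖ = ‖w‖ ^ n / qfact q n := by
    intro n
    rw [norm_div, norm_pow, Complex.norm_real, Real.norm_of_nonneg (hfactpos n).le]
  have hf : Summable (fun n : ℕ => ‖w ^ n / (qfact q n : ℂ)‖) := by
    simpa only [hnormf] using hsum
  set g : ℕ → ℂ := fun n =>
    (-1 : ℂ) ^ n * (q : ℂ) ^ (n * (n - 1) / 2) * w ^ n / (qfact q n : ℂ) with hg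
  have hgsum : Summable (fun n => ‖g n‖) := by
    apply hsum.of_nonneg_of_le (fun n => norm_nonneg _)
    intro n
    have : ‖g n‖ = q ^ (n * (n - 1) / 2) * ‖w‖ ^ n / qfact q n := by
      simp [hg, norm_div, norm_mul, norm_pow, Complex.norm_real,
        abs_of_pos hq0, Real.norm_of_nonneg (hfactpos n).le, abs_of_pos (hfactpos n)]
    rw [this]
    have hle : q ^ (n * (n - 1) / 2) ≤ 1 := pow_le_one₀ hq0.le hq1.le
    have hnum : q ^ (n * (n - 1) / 2) * ‖w‖ ^ n ≤ ‖w‖ ^ n :=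
      mul_le_of_le_one_left (pow_nonneg (norm_nonneg w) n) hle
    exact div_le_div_of_nonneg_right hnum (hfactpos n).le
  refine ⟨hgsum, ?_⟩
  have hcauchy : qexC q w * (∑' n, g n) =
      ∑' n : ℕ, ∑ k ∈ Finset.range (n + 1), (w ^ k / (qfact q k : ℂ)) * g (n - k) := by
    unfold qexC
    exact tsum_mul_tsum_eq_tsum_sum_range_of_summable_norm hf hgsum
  rw [hcauchy]
  have hzero : ∀ n : ℕ, n ≠ 0 →
      ∑ k ∈ Finset.range (n + 1), (w ^ k / (qfact q k : ℂ)) * g (n - k) = 0 := by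
    intro n hn
    have hpos : 0 < n := Nat.pos_of_ne_zero hn
    have hterm : ∀ k ∈ Finset.range (n + 1), (w ^ k / (qfact q k : ℂ)) * g (n - k) =
        w ^ n * (((-1 : ℝ) ^ (n - k) * q ^ ((n - k).choose 2) /
          (qfact q k * qfact q (n - k)) : ℝ) : ℂ) := by
      intro k hk
      have hkn : k ≤ n := Nat.lt_succ_iff.mp (Finset.mem_range.mp hk)
      have hch : (n - k) * ((n - k) - 1) / 2 = (n - k).choose 2 :=
        (Nat.choose_two_right (n - k)).symm
      have hww : w ^ k * w ^ (n - k) = w ^ n := pow_mul_pow_sub w hkn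
      rw [hg]
      push_cast
      rw [hch, ← hww]
      ring
    rw [Finset.sum_congr rfl hterm, ← Finset.mul_sum, ← Complex.ofReal_sum,
      key_identity' hq0 hq1 n hpos]
    simp
  rw [tsum_eq_single 0 hzero]
  simp [hg, qfact]
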